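/- arXiv:2310.19120 — 3 statements merged into one kernel-verified Lean document; each statement's English description precedes it below -/
import Mathlib

section
/- Let n be an odd positive integer and let β : ℕ → ℕ satisfy β i = 0 for all i > n and β (n - i) = β i for all 0 ≤ i ≤ n. Then 4 · ∑_{l=0}^{(n-1)/2} ∑_{(i,j) : i+j=2l} β i · β j = (∑_{i=0}^{n} β i)², where the inner sum ranges over all ordered pairs of nonnegative integers (i,j) with i + j = 2l. -/
open Finset

theorem stmt_0 (n : ℕ) (hn : Odd n) (hpos : 0 < n) (β : ℕ → ℕ)
    (hvanish : ∀ i, n < i → β i = 0)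
    (hsym : ∀ i, i ≤ n → β (n - i) = β i) :
    4 * ∑ l ∈ Finset.range ((n - 1) / 2 + 1),
        ∑ p ∈ Finset.HasAntidiagonal.antidiagonal (2 * l), β p.1 * β p.2 =
      (∑ i ∈ Finset.range (n + 1), β i) ^ 2 := by
  obtain ⟨m, hm⟩ := hn
  set sq : Finset (ℕ × ℕ) := Finset.range (n+1) ×ˢ Finset.range (n+1) with hsq
  set f : ℕ × ℕ → ℕ := fun p => β p.1 * β p.2 with hf
  set T : ℕ → ℕ := fun l => ∑ p ∈ sq.filter (fun p => p.1 + p.2 = 2*l), f p with hT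
  -- antidiagonal sums equal T
  have hA : ∀ l, l ≤ n → ∑ p ∈ Finset.HasAntidiagonal.antidiagonal (2*l), f p = T l := by
    intro l hl
    apply (Finset.sum_subset ?_ ?_).symm
    · intro p hp
      simp only [Finset.mem_filter] at hp
      simp [Finset.mem_antidiagonal, hp.2]
    · intro p hp hnp
      simp only [Finset.HasAntidiagonal.mem_antidiagonal] at hp
      have h2 : n < p.1 ∨ n < p.2 := by
        by_contra h
        push_neg at h
        exact hnp (by
          simp only [Finset.mem_filter, hsq, Finset.mem_product, Finset.mem_range]
          omega)
      rcases h2 with h1 | h1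
      · simp [hf, hvanish _ h1]
      · simp [hf, hvanish _ h1]
  -- reflection symmetry T l = T (n - l) for l ≤ n
  have hrefl : ∀ l, l ≤ n → T l = T (n - l) := by
    intro l hl
    apply Finset.sum_nbij' (fun p => ((n - p.1 : ℕ), (n - p.2 : ℕ)))
      (fun p => ((n - p.1 : ℕ), (n - p.2 : ℕ)))
    · intro p hp
      simp only [Finset.mem_filter, hsq, Finset.mem_product, Finset.mem_range] at hp ⊢
      omega
    · intro p hp
      simp only [Finset.mem_filter, hsq, Finset.mem_product, Finset.mem_range] at hp ⊢
      omega
    · intro p hp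
      simp only [Finset.mem_filter, hsq, Finset.mem_product, Finset.mem_range] at hp
      ext <;> simp <;> omega
    · intro p hp
      simp only [Finset.mem_filter, hsq, Finset.mem_product, Finset.mem_range] at hp
      ext <;> simp <;> omega
    · intro p hp
      simp only [Finset.mem_filter, hsq, Finset.mem_product, Finset.mem_range] at hp
      simp only [hf]
      rw [hsym p.1 (by omega), hsym p.2 (by omega)]
  -- parity symmetry: odd part = even part
  have hpar : ∑ p ∈ sq.filter (fun p => ¬ (p.1 + p.2) % 2 = 0), f p
      = ∑ p ∈ sq.filter (fun p => (p.1 + p.2) % 2 = 0), f p := by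
    apply Finset.sum_nbij' (fun p => ((n - p.1 : ℕ), p.2))
      (fun p => ((n - p.1 : ℕ), p.2))
    · intro p hp
      simp only [Finset.mem_filter, hsq, Finset.mem_product, Finset.mem_range] at hp ⊢
      omega
    · intro p hp
      simp only [Finset.mem_filter, hsq, Finset.mem_product, Finset.mem_range] at hp ⊢
      omega
    · intro p hp
      simp only [Finset.mem_filter, hsq, Finset.mem_product, Finset.mem_range] at hp
      ext <;> simp <;> omega
    · intro p hp
      simp only [Finset.mem_filter, hsq, Finset.mem_product, Finset.mem_range] at hp
      ext <;> simp <;> omega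
    · intro p hp
      simp only [Finset.mem_filter, hsq, Finset.mem_product, Finset.mem_range] at hp
      simp only [hf]
      rw [hsym p.1 (by omega)]
  -- total sum over square is B^2
  have htot : ∑ p ∈ sq, f p = (∑ i ∈ Finset.range (n + 1), β i) ^ 2 := by
    rw [hsq, Finset.sum_product, pow_two, Finset.sum_mul_sum]
  -- even part fiberwise
  have hfib : ∑ p ∈ sq.filter (fun p => (p.1 + p.2) % 2 = 0), f p
      = ∑ l ∈ Finset.range (n+1), T l := by
    rw [← Finset.sum_fiberwise_of_maps_to (g := fun p => (p.1 + p.2) / 2)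
      (t := Finset.range (n+1)) ?_ f]
    · apply Finset.sum_congr rfl
      intro l _
      rw [hT]
      apply Finset.sum_congr ?_ (fun _ _ => rfl)
      ext p
      simp only [Finset.mem_filter, hsq, Finset.mem_product, Finset.mem_range]
      omega
    · intro p hp
      simp only [Finset.mem_filter, hsq, Finset.mem_product, Finset.mem_range] at hp ⊢
      omega
  -- split the range
  have hsplit : ∑ l ∈ Finset.range (n+1), T l
      = 2 * ∑ l ∈ Finset.range ((n-1)/2 + 1), T l := by
    have hn2 : n + 1 = (m + 1) + (m + 1) := by omega
    have hm' : (n - 1) / 2 = m := by omega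
    rw [hn2, Finset.sum_range_add, hm', two_mul]
    congr 1
    rw [← Finset.sum_range_reflect]
    apply Finset.sum_congr rfl
    intro l hl
    simp only [Finset.mem_range] at hl
    rw [show m + 1 + (m + 1 - 1 - l) = n - l by omega, ← hrefl l (by omega)]
  -- assemble
  have heo : ∑ p ∈ sq, f p
      = 2 * ∑ p ∈ sq.filter (fun p => (p.1 + p.2) % 2 = 0), f p := by
    rw [← Finset.sum_filter_add_sum_filter_not sq (fun p => (p.1 + p.2) % 2 = 0) f,
      hpar, two_mul]
  calc 4 * ∑ l ∈ Finset.range ((n - 1) / 2 + 1),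
        ∑ p ∈ Finset.HasAntidiagonal.antidiagonal (2 * l), β p.1 * β p.2
      = 4 * ∑ l ∈ Finset.range ((n - 1) / 2 + 1), T l := by
        congr 1
        refine Finset.sum_congr rfl fun l hl => ?_
        simp only [Finset.mem_range] at hl
        exact hA l (by omega)
    _ = 2 * (2 * ∑ l ∈ Finset.range ((n-1)/2 + 1), T l) := by ring
    _ = 2 * ∑ l ∈ Finset.range (n+1), T l := by rw [hsplit]
    _ = 2 * ∑ p ∈ sq.filter (fun p => (p.1 + p.2) % 2 = 0), f p := by rw [hfib]
    _ = ∑ p ∈ sq, f p := heo.symm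
    _ = _ := htot
end

section
/- Let n be an odd positive integer and let β : ℕ → ℕ satisfy β i = 0 for all i > n and β (n - i) = β i for all 0 ≤ i ≤ n. Set β_even = ∑_{i : 2i ≤ n} β (2i) and β_odd = ∑_{i : 2i+1 ≤ n} β (2i+1). Then 2 · ∑_{l=0}^{(n-1)/2} ∑_{(i,j) : i+j=2l} β i · β j = β_even² + β_odd², where the inner sum ranges over all ordered pairs of nonnegative integers (i,j) with i + j = 2l. -/
theorem stmt_1 (n : ℕ) (hn : Odd n) (hpos : 0 < n) (β : ℕ → ℕ)
    (hvanish : ∀ i, n < i → β i = 0)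
    (hsym : ∀ i, i ≤ n → β (n - i) = β i) :
    2 * ∑ l ∈ Finset.range ((n - 1) / 2 + 1),
        ∑ p ∈ Finset.HasAntidiagonal.antidiagonal (2 * l), β p.1 * β p.2 =
      (∑ i ∈ Finset.range (n / 2 + 1), β (2 * i)) ^ 2 +
        (∑ i ∈ Finset.range ((n - 1) / 2 + 1), β (2 * i + 1)) ^ 2 := by
  classical
  obtain ⟨m, rfl⟩ := hn
  have hm1 : (2 * m + 1 - 1) / 2 = m := by omega
  have hm2 : (2 * m + 1) / 2 = m := by omega
  rw [hm1, hm2]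
  set SQ : Finset (ℕ × ℕ) := Finset.range (2 * m + 2) ×ˢ Finset.range (2 * m + 2) with hSQ
  -- rewrite each antidiagonal sum as a sum over the square
  have hS : ∀ l ∈ Finset.range (m + 1),
      ∑ p ∈ Finset.HasAntidiagonal.antidiagonal (2 * l), β p.1 * β p.2
        = ∑ p ∈ SQ.filter (fun p => p.1 + p.2 = 2 * l), β p.1 * β p.2 := by
    intro l _
    apply (Finset.sum_subset ?_ ?_).symm
    · intro p hp
      simp only [Finset.mem_filter, hSQ, Finset.mem_product, Finset.mem_range] at hp
      simp [Finset.mem_antidiagonal, hp.2]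
    · intro p hp hnp
      simp only [Finset.HasAntidiagonal.mem_antidiagonal] at hp
      simp only [Finset.mem_filter, hSQ, Finset.mem_product, Finset.mem_range, hp, and_true] at hnp
      have : 2 * m + 1 < p.1 ∨ 2 * m + 1 < p.2 := by omega
      rcases this with h | h
      · rw [hvanish _ h, zero_mul]
      · rw [hvanish _ h, mul_zero]
  rw [Finset.sum_congr rfl hS]
  -- symmetry : the sum for l equals the sum for (2m+1) - l
  have hsymm : ∀ l ≤ 2 * m + 1,
      (∑ p ∈ SQ.filter (fun p => p.1 + p.2 = 2 * l), β p.1 * β p.2)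
        = ∑ p ∈ SQ.filter (fun p => p.1 + p.2 = 2 * (2 * m + 1 - l)), β p.1 * β p.2 := by
    intro l hl
    refine Finset.sum_nbij' (fun p => (2 * m + 1 - p.1, 2 * m + 1 - p.2))
      (fun p => (2 * m + 1 - p.1, 2 * m + 1 - p.2)) ?_ ?_ ?_ ?_ ?_
    · intro p hp
      simp only [Finset.mem_filter, hSQ, Finset.mem_product, Finset.mem_range] at hp ⊢
      omega
    · intro p hp
      simp only [Finset.mem_filter, hSQ, Finset.mem_product, Finset.mem_range] at hp ⊢
      omega
    · intro p hp
      simp only [Finset.mem_filter, hSQ, Finset.mem_product, Finset.mem_range] at hp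
      ext <;> simp <;> omega
    · intro p hp
      simp only [Finset.mem_filter, hSQ, Finset.mem_product, Finset.mem_range] at hp
      ext <;> simp <;> omega
    · intro p hp
      simp only [Finset.mem_filter, hSQ, Finset.mem_product, Finset.mem_range] at hp
      rw [hsym p.1 (by omega), hsym p.2 (by omega)]
  -- double the sum : extend the range from m+1 to 2m+2
  have hdouble :
      2 * ∑ l ∈ Finset.range (m + 1),
          ∑ p ∈ SQ.filter (fun p => p.1 + p.2 = 2 * l), β p.1 * β p.2
        = ∑ l ∈ Finset.range (2 * m + 2),
          ∑ p ∈ SQ.filter (fun p => p.1 + p.2 = 2 * l), β p.1 * β p.2 := by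
    have hsplit := Finset.sum_Ico_consecutive
      (fun l => ∑ p ∈ SQ.filter (fun p => p.1 + p.2 = 2 * l), β p.1 * β p.2)
      (Nat.zero_le (m + 1)) (by omega : m + 1 ≤ 2 * m + 2)
    rw [Finset.range_eq_Ico, Finset.range_eq_Ico, ← hsplit, two_mul, ← Finset.range_eq_Ico]
    congr 1
    refine Finset.sum_nbij' (fun l => 2 * m + 1 - l) (fun l => 2 * m + 1 - l) ?_ ?_ ?_ ?_ ?_
    · intro l hl
      simp only [Finset.mem_range] at hl
      simp only [Finset.mem_Ico]
      omega
    · intro l hl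
      simp only [Finset.mem_Ico] at hl
      simp only [Finset.mem_range]
      omega
    · intro l hl; simp only [Finset.mem_range] at hl; omega
    · intro l hl; simp only [Finset.mem_Ico] at hl; omega
    · intro l hl
      simp only [Finset.mem_range] at hl
      exact hsymm l (by omega)
  rw [hdouble]
  -- collapse the double sum into a single sum over even-total pairs of the square
  have hfiber :
      ∑ l ∈ Finset.range (2 * m + 2),
          ∑ p ∈ SQ.filter (fun p => p.1 + p.2 = 2 * l), β p.1 * β p.2
        = ∑ p ∈ SQ.filter (fun p => Even (p.1 + p.2)), β p.1 * β p.2 := by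
    rw [← Finset.sum_fiberwise_of_maps_to
      (g := fun p : ℕ × ℕ => (p.1 + p.2) / 2)
      (t := Finset.range (2 * m + 2)) ?_ (fun p => β p.1 * β p.2)]
    · refine Finset.sum_congr rfl fun l hl => ?_
      simp only [Finset.mem_range] at hl
      refine Finset.sum_congr ?_ (fun _ _ => rfl)
      ext p
      simp only [Finset.mem_filter, hSQ, Finset.mem_product, Finset.mem_range,
        Nat.even_iff]
      omega
    · intro p hp
      simp only [Finset.mem_filter, hSQ, Finset.mem_product, Finset.mem_range] at hp
      simp only [Finset.mem_range]
      omega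
  rw [hfiber]
  -- split into (even, even) and (odd, odd) pairs
  rw [← Finset.sum_filter_add_sum_filter_not
    (SQ.filter (fun p => Even (p.1 + p.2))) (fun p => Even p.1)]
  congr 1
  · -- even-even part
    rw [Finset.filter_filter]
    rw [show (∑ i ∈ Finset.range (m + 1), β (2 * i)) ^ 2
        = ∑ p ∈ Finset.range (m + 1) ×ˢ Finset.range (m + 1), β (2 * p.1) * β (2 * p.2) by
      rw [Finset.sum_product, pow_two, Finset.sum_mul_sum]]
    refine (Finset.sum_nbij' (fun p : ℕ × ℕ => (2 * p.1, 2 * p.2))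
      (fun p : ℕ × ℕ => (p.1 / 2, p.2 / 2)) ?_ ?_ ?_ ?_ ?_).symm
    · intro p hp
      simp only [Finset.mem_product, Finset.mem_range] at hp
      simp only [Finset.mem_filter, hSQ, Finset.mem_product, Finset.mem_range, Nat.even_iff]
      omega
    · intro p hp
      simp only [Finset.mem_filter, hSQ, Finset.mem_product, Finset.mem_range,
        Nat.even_iff] at hp
      simp only [Finset.mem_product, Finset.mem_range]
      omega
    · intro p hp
      simp only [Finset.mem_product, Finset.mem_range] at hp
      ext <;> simp <;> omega
    · intro p hp
      simp only [Finset.mem_filter, hSQ, Finset.mem_product, Finset.mem_range,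
        Nat.even_iff] at hp
      ext <;> simp <;> omega
    · intro p hp; rfl
  · -- odd-odd part
    rw [Finset.filter_filter]
    rw [show (∑ i ∈ Finset.range (m + 1), β (2 * i + 1)) ^ 2
        = ∑ p ∈ Finset.range (m + 1) ×ˢ Finset.range (m + 1),
            β (2 * p.1 + 1) * β (2 * p.2 + 1) by
      rw [Finset.sum_product, pow_two, Finset.sum_mul_sum]]
    refine (Finset.sum_nbij' (fun p : ℕ × ℕ => (2 * p.1 + 1, 2 * p.2 + 1))
      (fun p : ℕ × ℕ => (p.1 / 2, p.2 / 2)) ?_ ?_ ?_ ?_ ?_).symm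
    · intro p hp
      simp only [Finset.mem_product, Finset.mem_range] at hp
      simp only [Finset.mem_filter, hSQ, Finset.mem_product, Finset.mem_range, Nat.even_iff]
      omega
    · intro p hp
      simp only [Finset.mem_filter, hSQ, Finset.mem_product, Finset.mem_range,
        Nat.even_iff] at hp
      simp only [Finset.mem_product, Finset.mem_range]
      omega
    · intro p hp
      simp only [Finset.mem_product, Finset.mem_range] at hp
      ext <;> simp <;> omega
    · intro p hp
      simp only [Finset.mem_filter, hSQ, Finset.mem_product, Finset.mem_range,
        Nat.even_iff] at hp
      ext <;> simp <;> omega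
    · intro p hp; rfl
end

section
/- Let n be an even positive integer and let β : ℕ → ℕ satisfy β i = 0 for all i > n and β (n - i) = β i for all 0 ≤ i ≤ n. Set β_even = ∑_{i : 2i ≤ n} β (2i) and β_odd = ∑_{i : 2i+1 ≤ n} β (2i+1). Then 2 · ∑_{l=1}^{n/2} ∑_{(a,b) : a+b=2l-1, a<b} β a · β b = β_even · β_odd, where the inner sum ranges over all pairs of nonnegative integers (a,b) with a + b = 2l - 1 and a < b. -/
theorem stmt_7 (n : ℕ) (hn : Even n) (hpos : 0 < n) (β : ℕ → ℕ)
    (hvanish : ∀ i, n < i → β i = 0)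
    (hsym : ∀ i, i ≤ n → β (n - i) = β i) :
    2 * ∑ l ∈ Finset.Icc 1 (n / 2),
        ∑ p ∈ (Finset.HasAntidiagonal.antidiagonal (2 * l - 1)).filter (fun p => p.1 < p.2),
          β p.1 * β p.2 =
      (∑ i ∈ Finset.range (n / 2 + 1), β (2 * i)) *
        (∑ i ∈ Finset.range ((n - 1) / 2 + 1), β (2 * i + 1)) := by
  obtain ⟨m, hm⟩ := hn
  have hm2 : n = 2 * m := by omega
  have hmpos : 0 < m := by omega
  have hd1 : n / 2 = m := by omega
  have hd2 : (n - 1) / 2 + 1 = m := by omega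
  rw [hd1, hd2]
  -- Step 1: double the inner sum to get the full antidiagonal
  rw [Finset.mul_sum]
  have step1 : ∀ l ∈ Finset.Icc 1 m,
      2 * ∑ p ∈ (Finset.HasAntidiagonal.antidiagonal (2 * l - 1)).filter (fun p => p.1 < p.2),
          β p.1 * β p.2
      = ∑ p ∈ Finset.HasAntidiagonal.antidiagonal (2 * l - 1), β p.1 * β p.2 := by
    intro l hl
    rw [Finset.mem_Icc] at hl
    have key : ∑ p ∈ (Finset.HasAntidiagonal.antidiagonal (2 * l - 1)).filter (fun p => p.1 < p.2),
          β p.1 * β p.2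
        = ∑ p ∈ (Finset.HasAntidiagonal.antidiagonal (2 * l - 1)).filter (fun p => ¬ p.1 < p.2),
          β p.1 * β p.2 := by
      apply Finset.sum_nbij' (fun p : ℕ × ℕ => Prod.swap p) (fun p : ℕ × ℕ => Prod.swap p)
      · intro p hp
        simp only [Finset.mem_filter, Finset.HasAntidiagonal.mem_antidiagonal, Prod.swap, Prod.fst, Prod.snd] at hp ⊢
        omega
      · intro p hp
        simp only [Finset.mem_filter, Finset.HasAntidiagonal.mem_antidiagonal, Prod.swap, Prod.fst, Prod.snd] at hp ⊢
        omega
      · intro p _; simp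
      · intro p _; simp
      · intro p _; exact Nat.mul_comm _ _
    rw [two_mul]
    nth_rewrite 2 [key]
    exact Finset.sum_filter_add_sum_filter_not _ _ _
  rw [Finset.sum_congr rfl step1]
  -- Step 2: combine into one sum over A
  have hdisj : (↑(Finset.Icc 1 m) : Set ℕ).PairwiseDisjoint
      (fun l => Finset.HasAntidiagonal.antidiagonal (2 * l - 1)) := by
    intro a ha b hb hab
    simp only [Finset.mem_coe, Finset.mem_Icc] at ha hb
    simp only [Function.onFun, Finset.disjoint_left]
    intro p hp hq
    rw [Finset.HasAntidiagonal.mem_antidiagonal] at hp hq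
    omega
  rw [← Finset.sum_biUnion hdisj]
  -- Step 3: RHS as a sum over a product
  rw [Finset.sum_mul_sum]
  rw [← Finset.sum_product']
  -- Step 4: the bijection
  apply Finset.sum_nbij'
    (fun p : ℕ × ℕ => if p.1 % 2 = 0 then (p.1 / 2, p.2 / 2) else ((n - p.2) / 2, (n - p.1) / 2))
    (fun q : ℕ × ℕ => if 2 * q.1 + (2 * q.2 + 1) ≤ n - 1 then (2 * q.1, 2 * q.2 + 1)
      else (n - (2 * q.2 + 1), n - 2 * q.1))
  · intro p hp
    simp only [Finset.mem_biUnion, Finset.mem_Icc, Finset.HasAntidiagonal.mem_antidiagonal] at hp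
    obtain ⟨l, hl, hsum⟩ := hp
    by_cases h : p.1 % 2 = 0 <;>
      simp only [h, if_pos, if_neg, ite_true, ite_false, Finset.mem_product,
        Finset.mem_range] <;> constructor <;> omega
  · intro q hq
    simp only [Finset.mem_product, Finset.mem_range] at hq
    simp only [Finset.mem_biUnion, Finset.mem_Icc, Finset.HasAntidiagonal.mem_antidiagonal]
    by_cases h : 2 * q.1 + (2 * q.2 + 1) ≤ n - 1
    · rw [if_pos h]
      exact ⟨q.1 + q.2 + 1, by omega, by omega⟩
    · rw [if_neg h]
      refine ⟨(2 * n - (2 * q.1 + 2 * q.2 + 1) + 1) / 2, by omega, by omega⟩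
  · intro p hp
    simp only [Finset.mem_biUnion, Finset.mem_Icc, Finset.HasAntidiagonal.mem_antidiagonal] at hp
    obtain ⟨l, hl, hsum⟩ := hp
    by_cases h : p.1 % 2 = 0
    · rw [if_pos h]
      have h1 : 2 * (p.1 / 2) = p.1 := by omega
      have h2 : 2 * (p.2 / 2) + 1 = p.2 := by omega
      rw [if_pos (by omega)]
      ext <;> simp <;> omega
    · rw [if_neg h]
      rw [if_neg (by omega)]
      ext <;> simp <;> omega
  · intro q hq
    simp only [Finset.mem_product, Finset.mem_range] at hq
    by_cases h : 2 * q.1 + (2 * q.2 + 1) ≤ n - 1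
    · rw [if_pos h, if_pos (by omega)]
      ext <;> simp <;> omega
    · rw [if_neg h, if_neg (by omega)]
      ext <;> simp <;> omega
  · intro p hp
    simp only [Finset.mem_biUnion, Finset.mem_Icc, Finset.HasAntidiagonal.mem_antidiagonal] at hp
    obtain ⟨l, hl, hsum⟩ := hp
    by_cases h : p.1 % 2 = 0
    · rw [if_pos h]
      have h1 : 2 * (p.1 / 2) = p.1 := by omega
      have h2 : 2 * (p.2 / 2) + 1 = p.2 := by omega
      simp only [h1, h2]
    · rw [if_neg h]
      have h1 : 2 * ((n - p.2) / 2) = n - p.2 := by omega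
      have h2 : 2 * ((n - p.1) / 2) + 1 = n - p.1 := by omega
      simp only [h1, h2]
      rw [hsym p.2 (by omega), hsym p.1 (by omega), Nat.mul_comm]
end
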